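/- Let A = [[3, 2√2, 0], [2√2, 3, 0], [0, 0, 1]] and for t ∈ ℝ let B_t = [[√(1+t²), 0, t], [0, 1, 0], [t, 0, √(1+t²)]], both elements of O(2,1) with respect to η = diag(−1,1,1). Let r_t = diag(1, 1, t⁻¹) for t ≠ 0. Then the rescaled commutator r_t·(A·B_t·A⁻¹·B_t⁻¹)·r_t⁻¹ converges, as t → 0 through nonzero values, to the matrix [[1,0,0],[0,1,0],[2,−2√2,1]]. -/

import Mathlib

open Matrix Filter Topology

noncomputable def gmat (t : ℝ) : Matrix (Fin 3) (Fin 3) ℝ :=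
  !![9 - 8 * Real.sqrt (1 + t ^ 2) + 6 * t ^ 2,
     6 * Real.sqrt 2 - 6 * Real.sqrt 2 * Real.sqrt (1 + t ^ 2),
     8 * t ^ 2 - 6 * t ^ 2 * Real.sqrt (1 + t ^ 2);
     6 * Real.sqrt 2 - 6 * Real.sqrt 2 * Real.sqrt (1 + t ^ 2) + 4 * Real.sqrt 2 * t ^ 2,
     9 - 8 * Real.sqrt (1 + t ^ 2),
     6 * Real.sqrt 2 * t ^ 2 - 4 * Real.sqrt 2 * t ^ 2 * Real.sqrt (1 + t ^ 2);
     2 * Real.sqrt (1 + t ^ 2),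
     -(2 * Real.sqrt 2),
     1 - 2 * t ^ 2]

/-- The rescaled commutator of the cone-torus holonomies
`A = [[3,2√2,0],[2√2,3,0],[0,0,1]]` and
`B_t = [[√(1+t²),0,t],[0,1,0],[t,0,√(1+t²)]]` converges, as `t → 0` through
nonzero values, to the half-pipe isometry `[[1,0,0],[0,1,0],[2,-2√2,1]]`. -/
theorem stmt_5
    (A : Matrix (Fin 3) (Fin 3) ℝ)
    (hA : A = !![3, 2 * Real.sqrt 2, 0; 2 * Real.sqrt 2, 3, 0; 0, 0, 1])
    (B : ℝ → Matrix (Fin 3) (Fin 3) ℝ)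
    (hB : ∀ t : ℝ, B t = !![Real.sqrt (1 + t ^ 2), 0, t; 0, 1, 0;
      t, 0, Real.sqrt (1 + t ^ 2)])
    (r : ℝ → Matrix (Fin 3) (Fin 3) ℝ)
    (hr : ∀ t : ℝ, r t = !![1, 0, 0; 0, 1, 0; 0, 0, t⁻¹]) :
    Tendsto (fun t : ℝ => r t * (A * B t * A⁻¹ * (B t)⁻¹) * (r t)⁻¹)
      (𝓝[≠] (0 : ℝ)) (𝓝 !![1, 0, 0; 0, 1, 0; 2, -(2 * Real.sqrt 2), 1]) := by
  have h2 : Real.sqrt 2 * Real.sqrt 2 = 2 := Real.mul_self_sqrt (by norm_num)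
  have hbs : ∀ t : ℝ, Real.sqrt (1 + t ^ 2) * Real.sqrt (1 + t ^ 2) = 1 + t ^ 2 :=
    fun t => Real.mul_self_sqrt (by positivity)
  -- inverse of A
  have hAi : A⁻¹ = !![3, -(2 * Real.sqrt 2), 0; -(2 * Real.sqrt 2), 3, 0; 0, 0, 1] := by
    apply Matrix.inv_eq_right_inv
    rw [hA]
    ext i j
    fin_cases i <;> fin_cases j <;>
      simp [Matrix.mul_apply, Fin.sum_univ_three, Matrix.one_apply] <;>
      nlinarith [h2]
  -- inverse of B t
  have hBi : ∀ t : ℝ, (B t)⁻¹ =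
      !![Real.sqrt (1 + t ^ 2), 0, -t; 0, 1, 0; -t, 0, Real.sqrt (1 + t ^ 2)] := by
    intro t
    apply Matrix.inv_eq_right_inv
    rw [hB]
    ext i j
    fin_cases i <;> fin_cases j <;>
      simp [Matrix.mul_apply, Fin.sum_univ_three, Matrix.one_apply] <;>
      nlinarith [hbs t]
  -- inverse of r t (for t ≠ 0)
  have hri : ∀ t : ℝ, t ≠ 0 → (r t)⁻¹ = !![1, 0, 0; 0, 1, 0; 0, 0, t] := by
    intro t ht
    apply Matrix.inv_eq_right_inv
    rw [hr]
    ext i j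
    fin_cases i <;> fin_cases j <;>
      simp [Matrix.mul_apply, Fin.sum_univ_three, Matrix.one_apply, inv_mul_cancel₀ ht,
        Matrix.vecHead, Matrix.vecTail]
  -- on t ≠ 0 the function agrees with gmat
  have hkey : ∀ t : ℝ, t ≠ 0 →
      r t * (A * B t * A⁻¹ * (B t)⁻¹) * (r t)⁻¹ = gmat t := by
    intro t ht
    rw [hAi, hBi, hri t ht, hr, hA, hB]
    have hb := hbs t
    ext i j
    fin_cases i <;> fin_cases j <;>
      simp [gmat, Matrix.mul_apply, Fin.sum_univ_three] <;>
      (try simp only [Matrix.vecHead, Matrix.vecTail, Function.comp_apply])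
    · linear_combination (-4 * Real.sqrt (1 + t ^ 2)) * h2 + 9 * hb
    · ring
    · linear_combination (4 * t ^ 2) * h2
    · linear_combination (6 * Real.sqrt 2) * hb
    · linear_combination (-4 * Real.sqrt (1 + t ^ 2)) * h2
    · ring
    · field_simp
      ring
    · field_simp
    · field_simp
      linear_combination hb
  -- gmat is continuous with value the limit at 0
  have hg : Tendsto gmat (𝓝 (0 : ℝ)) (𝓝 !![1, 0, 0; 0, 1, 0; 2, -(2 * Real.sqrt 2), 1]) := by
    have hcont : Continuous gmat := by
      apply continuous_matrix
      intro i j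
      fin_cases i <;> fin_cases j <;> simp [gmat] <;> fun_prop
    have h0 : gmat 0 = !![1, 0, 0; 0, 1, 0; 2, -(2 * Real.sqrt 2), 1] := by
      unfold gmat
      norm_num
    rw [← h0]
    exact hcont.tendsto 0
  refine Tendsto.congr' ?_ (hg.mono_left nhdsWithin_le_nhds)
  filter_upwards [self_mem_nhdsWithin] with t ht
  exact (hkey t ht).symm
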